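/- Let M > 0, 0 ≤ a ≤ M, m ∈ ℤ, and set Δ(r) := r² − 2Mr + a², r₊ := M + √(M² − a²), Ω := (r₊,∞) × (0,π), w(r,θ) := (r²+a²)²/Δ(r) − a² sin²θ, and α := m²a²/(4M²r₊²). Then for every f ∈ C²(Ω,ℂ) with compact support contained in Ω one has ∫_Ω [ Δ(r) |∂f/∂r|² + |∂f/∂θ|² + (m²/sin²θ − m²a²/Δ(r)) |f|² ] · sin θ dr dθ ≥ −α · ∫_Ω w(r,θ) |f|² sin θ dr dθ. In other words, the reduced wave operator A₀ is semibounded from below with lower bound −α on L²(Ω, w sinθ dr dθ). -/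

import Mathlib

open MeasureTheory

/-- Kerr horizon function `Δ(r) = r² − 2Mr + a²`. -/
noncomputable def kerrDelta (M a r : ℝ) : ℝ := r ^ 2 - 2 * M * r + a ^ 2

/-- Outer horizon radius `r₊ = M + √(M² − a²)`. -/
noncomputable def rPlus (M a : ℝ) : ℝ := M + Real.sqrt (M ^ 2 - a ^ 2)

/-- The weight `w(r,θ) = (r²+a²)²/Δ(r) − a² sin²θ`. -/
noncomputable def kerrW (M a r θ : ℝ) : ℝ :=
  (r ^ 2 + a ^ 2) ^ 2 / kerrDelta M a r - a ^ 2 * Real.sin θ ^ 2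

/-- Partial derivative in the first (radial) variable. -/
noncomputable def pdr (f : ℝ × ℝ → ℂ) (p : ℝ × ℝ) : ℂ := deriv (fun x => f (x, p.2)) p.1

/-- Partial derivative in the second (angular) variable. -/
noncomputable def pdθ (f : ℝ × ℝ → ℂ) (p : ℝ × ℝ) : ℂ := deriv (fun y => f (p.1, y)) p.2


lemma rplus_sq (M a : ℝ) (hM : 0 < M) (ha : 0 ≤ a) (haM : a ≤ M) :
    rPlus M a ^ 2 + a ^ 2 = 2 * M * rPlus M a := by
  have h : Real.sqrt (M ^ 2 - a ^ 2) ^ 2 = M ^ 2 - a ^ 2 :=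
    Real.sq_sqrt (by nlinarith)
  simp only [rPlus]
  linear_combination h

lemma rplus_ge (M a : ℝ) : M ≤ rPlus M a :=
  le_add_of_nonneg_right (Real.sqrt_nonneg _)

lemma delta_pos (M a : ℝ) (hM : 0 < M) (ha : 0 ≤ a) (haM : a ≤ M) {r : ℝ}
    (hr : rPlus M a < r) : 0 < kerrDelta M a r := by
  have h1 := rplus_sq M a hM ha haM
  have h2 := rplus_ge M a
  have h3 : 0 < r - rPlus M a := by linarith
  have h4 : 0 < r + rPlus M a - 2 * M := by linarith
  have := mul_pos h3 h4
  simp only [kerrDelta]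
  nlinarith [this]

lemma coef_nonneg (M a : ℝ) (m : ℤ) (hM : 0 < M) (ha : 0 ≤ a) (haM : a ≤ M)
    {r θ : ℝ} (hr : rPlus M a < r) (hθ1 : 0 < θ) (hθ2 : θ < Real.pi) :
    0 ≤ ((m : ℝ) ^ 2 / Real.sin θ ^ 2 - (m : ℝ) ^ 2 * a ^ 2 / kerrDelta M a r)
      + (m : ℝ) ^ 2 * a ^ 2 / (4 * M ^ 2 * rPlus M a ^ 2) * kerrW M a r θ := by
  have hs : 0 < Real.sin θ := Real.sin_pos_of_pos_of_lt_pi hθ1 hθ2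
  have hs1 : Real.sin θ ≤ 1 := Real.sin_le_one θ
  have hD : 0 < kerrDelta M a r := delta_pos M a hM ha haM hr
  have h2 := rplus_ge M a
  have hrp0 : 0 < rPlus M a := lt_of_lt_of_le hM h2
  have h1 := rplus_sq M a hM ha haM
  set s := Real.sin θ
  set rp := rPlus M a
  set D := kerrDelta M a r
  have hK : 4 * M ^ 2 * rp ^ 2 = (rp ^ 2 + a ^ 2) ^ 2 := by rw [h1]; ring
  have hrr : rp ^ 2 ≤ r ^ 2 := by nlinarith
  have hb : 4 * M ^ 2 * rp ^ 2 ≤ (r ^ 2 + a ^ 2) ^ 2 := by nlinarith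
  have hs4 : s ^ 4 ≤ 1 := pow_le_one₀ hs.le hs1
  have hM2 : M ^ 2 ≤ rp ^ 2 := by nlinarith
  have ha4 : a ^ 4 ≤ M ^ 2 * rp ^ 2 := by
    nlinarith [pow_le_pow_left₀ ha haM 4,
      mul_le_mul_of_nonneg_left hM2 (sq_nonneg M)]
  have hKa : a ^ 4 * s ^ 4 ≤ 4 * M ^ 2 * rp ^ 2 := by
    nlinarith [mul_le_mul_of_nonneg_left hs4 (by positivity : (0:ℝ) ≤ a ^ 4)]
  have heq : ((m : ℝ) ^ 2 / s ^ 2 - (m : ℝ) ^ 2 * a ^ 2 / D)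
      + (m : ℝ) ^ 2 * a ^ 2 / (4 * M ^ 2 * rp ^ 2) * kerrW M a r θ
      = (m : ℝ) ^ 2 * (D * (4 * M ^ 2 * rp ^ 2 - a ^ 4 * s ^ 4)
          + a ^ 2 * s ^ 2 * ((r ^ 2 + a ^ 2) ^ 2 - 4 * M ^ 2 * rp ^ 2))
        / (s ^ 2 * D * (4 * M ^ 2 * rp ^ 2)) := by
    have e1 : kerrW M a r θ = (r ^ 2 + a ^ 2) ^ 2 / D - a ^ 2 * s ^ 2 := rfl
    have hD' := hD.ne'
    have hs' := hs.ne'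
    have hK0 : 4 * M ^ 2 * rp ^ 2 ≠ 0 := by positivity
    rw [e1]
    field_simp
    ring
  rw [heq]
  apply div_nonneg
  · nlinarith [sq_nonneg ((m:ℝ)), mul_nonneg (mul_nonneg (sq_nonneg a) (sq_nonneg s)) (sub_nonneg.2 hb), mul_nonneg hD.le (sub_nonneg.2 hKa)]
  · positivity
lemma pdr_eq (f : ℝ × ℝ → ℂ) (hf : Differentiable ℝ f) (p : ℝ × ℝ) :
    pdr f p = fderiv ℝ f p (1, 0) := by
  have h1 : HasDerivAt (fun x : ℝ => (x, p.2)) ((1 : ℝ), (0 : ℝ)) p.1 :=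
    (hasDerivAt_id p.1).prodMk (hasDerivAt_const p.1 p.2)
  have h2 := ((hf (p.1, p.2)).hasFDerivAt.comp_hasDerivAt p.1 h1)
  exact h2.deriv

lemma pdθ_eq (f : ℝ × ℝ → ℂ) (hf : Differentiable ℝ f) (p : ℝ × ℝ) :
    pdθ f p = fderiv ℝ f p (0, 1) := by
  have h1 : HasDerivAt (fun y : ℝ => (p.1, y)) ((0 : ℝ), (1 : ℝ)) p.2 :=
    (hasDerivAt_const p.2 p.1).prodMk (hasDerivAt_id p.2)
  have h2 := ((hf (p.1, p.2)).hasFDerivAt.comp_hasDerivAt p.2 h1)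
  exact h2.deriv

lemma fderiv_zero_of_nmem (f : ℝ × ℝ → ℂ) (p : ℝ × ℝ) (hp : p ∉ tsupport f) :
    fderiv ℝ f p = 0 := by
  have hf0 : f =ᶠ[nhds p] (fun _ => (0 : ℂ)) := by
    filter_upwards [(isClosed_tsupport f).isOpen_compl.mem_nhds hp] with q hq
    exact image_eq_zero_of_notMem_tsupport hq
  rw [hf0.fderiv_eq]
  exact fderiv_const_apply 0

lemma cont_aux {g : ℝ × ℝ → ℝ} {U K : Set (ℝ × ℝ)} (hU : IsOpen U)
    (hgU : ContinuousOn g U) (hK : IsClosed K) (hKU : K ⊆ U)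
    (hg0 : ∀ p ∉ K, g p = 0) : Continuous g := by
  rw [continuous_iff_continuousAt]
  intro p
  by_cases hp : p ∈ U
  · exact hgU.continuousAt (hU.mem_nhds hp)
  · have h0 : g =ᶠ[nhds p] fun _ => (0 : ℝ) := by
      filter_upwards [hK.isOpen_compl.mem_nhds (fun h => hp (hKU h))] with q hq
      exact hg0 q hq
    exact continuousAt_const.congr h0.symm

lemma int_aux {g : ℝ × ℝ → ℝ} {U : Set (ℝ × ℝ)} {f : ℝ × ℝ → ℂ} (hU : IsOpen U)
    (hgU : ContinuousOn g U) (hfc : HasCompactSupport f) (hKU : tsupport f ⊆ U)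
    (hg0 : ∀ p ∉ tsupport f, g p = 0) : IntegrableOn g U := by
  have hc : Continuous g := cont_aux hU hgU (isClosed_tsupport f) hKU hg0
  have hcs : HasCompactSupport g := hfc.mono' (fun p hp => by
    by_contra h; exact hp (hg0 p h))
  exact (hc.integrable_of_hasCompactSupport hcs).integrableOn

lemma main_aux {S : Set (ℝ × ℝ)} (hS : MeasurableSet S) (g₁ g₂ : ℝ × ℝ → ℝ) (α : ℝ)
    (h1 : IntegrableOn g₁ S) (h2 : IntegrableOn g₂ S)
    (hpt : ∀ p ∈ S, 0 ≤ g₁ p + α * g₂ p) :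
    (∫ p in S, g₁ p) ≥ -α * ∫ p in S, g₂ p := by
  have h0 : 0 ≤ ∫ p in S, (g₁ p + α * g₂ p) := setIntegral_nonneg hS hpt
  rw [integral_add h1 (h2.const_mul α), integral_const_mul] at h0
  linarith

theorem stmt_4 (M a : ℝ) (m : ℤ) (hM : 0 < M) (ha : 0 ≤ a) (haM : a ≤ M)
    (f : ℝ × ℝ → ℂ) (hf : ContDiff ℝ 2 f) (hfc : HasCompactSupport f)
    (hfsupp : tsupport f ⊆ Set.Ioi (rPlus M a) ×ˢ Set.Ioo 0 Real.pi) :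
    ∫ p in Set.Ioi (rPlus M a) ×ˢ Set.Ioo 0 Real.pi,
        (kerrDelta M a p.1 * ‖pdr f p‖ ^ 2 + ‖pdθ f p‖ ^ 2 +
            ((m : ℝ) ^ 2 / Real.sin p.2 ^ 2 -
              (m : ℝ) ^ 2 * a ^ 2 / kerrDelta M a p.1) * ‖f p‖ ^ 2) *
          Real.sin p.2 ≥
      -((m : ℝ) ^ 2 * a ^ 2 / (4 * M ^ 2 * rPlus M a ^ 2)) *
        ∫ p in Set.Ioi (rPlus M a) ×ˢ Set.Ioo 0 Real.pi,
          kerrW M a p.1 p.2 * ‖f p‖ ^ 2 * Real.sin p.2 := by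
  have hfd : Differentiable ℝ f := hf.differentiable (by norm_num)
  have hSopen : IsOpen (Set.Ioi (rPlus M a) ×ˢ Set.Ioo 0 Real.pi) :=
    isOpen_Ioi.prod isOpen_Ioo
  -- continuity of the partial derivatives
  have hcf : Continuous (fun p => fderiv ℝ f p) := hf.continuous_fderiv (by norm_num)
  have hcr : Continuous (pdr f) := by
    have h : pdr f = fun p => fderiv ℝ f p (1, 0) := funext fun p => pdr_eq f hfd p
    rw [h]; exact hcf.clm_apply continuous_const
  have hcθ : Continuous (pdθ f) := by
    have h : pdθ f = fun p => fderiv ℝ f p (0, 1) := funext fun p => pdθ_eq f hfd p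
    rw [h]; exact hcf.clm_apply continuous_const
  -- vanishing off the support
  have hz : ∀ p ∉ tsupport f, f p = 0 ∧ pdr f p = 0 ∧ pdθ f p = 0 := by
    intro p hp
    have h0 := fderiv_zero_of_nmem f p hp
    refine ⟨image_eq_zero_of_notMem_tsupport hp, ?_, ?_⟩
    · rw [pdr_eq f hfd, h0]; rfl
    · rw [pdθ_eq f hfd, h0]; rfl
  -- basic positivity facts on the domain
  have hΔ : ∀ p ∈ Set.Ioi (rPlus M a) ×ˢ Set.Ioo 0 Real.pi,
      kerrDelta M a p.1 ≠ 0 := fun p hp => (delta_pos M a hM ha haM hp.1).ne'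
  have hsin : ∀ p ∈ Set.Ioi (rPlus M a) ×ˢ Set.Ioo 0 Real.pi,
      Real.sin p.2 ^ 2 ≠ 0 := fun p hp =>
    pow_ne_zero 2 (Real.sin_pos_of_pos_of_lt_pi hp.2.1 hp.2.2).ne'
  have hcΔ : Continuous (fun p : ℝ × ℝ => kerrDelta M a p.1) := by
    simp only [kerrDelta]; fun_prop
  have hcsin : Continuous (fun p : ℝ × ℝ => Real.sin p.2) := by fun_prop
  -- apply the abstract lemma
  apply main_aux hSopen.measurableSet
  · -- integrability of g₁
    apply int_aux hSopen ?_ hfc hfsupp ?_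
    · apply ContinuousOn.mul ?_ hcsin.continuousOn
      apply ContinuousOn.add (ContinuousOn.add
        ((hcΔ.mul (hcr.norm.pow 2)).continuousOn) ((hcθ.norm.pow 2).continuousOn))
      exact ((continuousOn_const.div ((hcsin.pow 2).continuousOn) hsin).sub
        (continuousOn_const.div hcΔ.continuousOn hΔ)).mul
        ((hf.continuous.norm.pow 2).continuousOn)
    · intro p hp
      obtain ⟨h1, h2, h3⟩ := hz p hp
      simp [h1, h2, h3]
  · -- integrability of g₂
    apply int_aux hSopen ?_ hfc hfsupp ?_
    · apply ContinuousOn.mul (ContinuousOn.mul ?_ ((hf.continuous.norm.pow 2).continuousOn))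
        hcsin.continuousOn
      simp only [kerrW]
      exact (ContinuousOn.div (by fun_prop) hcΔ.continuousOn hΔ).sub
        (continuousOn_const.mul ((hcsin.pow 2).continuousOn))
    · intro p hp
      simp [(hz p hp).1]
  · -- pointwise nonnegativity
    intro p hp
    have hD : 0 < kerrDelta M a p.1 := delta_pos M a hM ha haM hp.1
    have hs : 0 < Real.sin p.2 := Real.sin_pos_of_pos_of_lt_pi hp.2.1 hp.2.2
    have hc := coef_nonneg M a m hM ha haM hp.1 hp.2.1 hp.2.2
    nlinarith [mul_nonneg (mul_nonneg hc (sq_nonneg ‖f p‖)) hs.le,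
      mul_nonneg (mul_nonneg hD.le (sq_nonneg ‖pdr f p‖)) hs.le,
      mul_nonneg (sq_nonneg ‖pdθ f p‖) hs.le]
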